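/- arXiv:1905.00951 — 7 statements merged into one kernel-verified Lean document; each statement's English description precedes it below -/
import Mathlib

section
/- Let G be a torsion-free group and let α be a nonzero element of the complex group algebra ℂG such that 2‖α‖₂² ≥ ‖α‖₁². Then α is regular in ℂG, i.e. for every nonzero β ∈ ℂG one has αβ ≠ 0. -/
open scoped ENNReal

/-- The adjoint `α* = ∑ conj(a_g)·g⁻¹` of an element of the complex group algebra. -/
noncomputable def MonoidAlgebra.adj {G : Type*} [Group G] (α : MonoidAlgebra ℂ G) :
    MonoidAlgebra ℂ G :=
  MonoidAlgebra.ofCoeff (Finsupp.mapRange (starRingEnd ℂ) (map_zero _) (Finsupp.equivMapDomain (Equiv.inv G) α.coeff))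

/-- The product of `α ∈ ℂG` with `β ∈ ℓ²(G)`, defined pointwise by the finite sum
`(αβ)(x) = ∑_{g ∈ supp α} α(g)·β(g⁻¹x)`. -/
noncomputable def smulL2 {G : Type*} [Group G] (α : MonoidAlgebra ℂ G)
    (β : lp (fun _ : G => ℂ) 2) : G → ℂ :=
  fun x => ∑ g ∈ α.coeff.support, α.coeff g * β (g⁻¹ * x)

/-- `Υ(α) = a_1 − ∑_{g ≠ 1} |a_g|` (for self-adjoint `α`, `a_1` is real, so we take
the real part). -/
noncomputable def Upsilon {G : Type*} [Group G] [DecidableEq G] (α : MonoidAlgebra ℂ G) : ℝ :=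
  (α.coeff 1).re - ∑ g ∈ α.coeff.support.erase 1, ‖α.coeff g‖

/-- A self-adjoint element of `ℂG` is golden if `Υ(α) ≥ 0`. -/
def IsGolden {G : Type*} [Group G] [DecidableEq G] (α : MonoidAlgebra ℂ G) : Prop :=
  MonoidAlgebra.adj α = α ∧ 0 ≤ Upsilon α

lemma translate_memℓp {G : Type*} [Group G] (g : G) (f : lp (fun _ : G => ℝ) ∞) :
    Memℓp (fun x => f (g⁻¹ * x)) ∞ := by
  have hf : Memℓp (fun x => f x) ∞ := f.2
  rw [memℓp_infty_iff] at hf ⊢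
  obtain ⟨C, hC⟩ := hf
  exact ⟨C, by rintro y ⟨x, rfl⟩; exact hC ⟨g⁻¹ * x, rfl⟩⟩

/-- A group is amenable if there is a left-invariant mean on `ℓ∞(G, ℝ)`: a linear
functional `m` with `m 1 = 1`, `m f ≥ 0` whenever `f ≥ 0`, which is invariant under
left translation. -/
def IsAmenable (G : Type*) [Group G] : Prop :=
  ∃ m : lp (fun _ : G => ℝ) ∞ →ₗ[ℝ] ℝ,
    m 1 = 1 ∧
    (∀ f : lp (fun _ : G => ℝ) ∞, (∀ x, 0 ≤ f x) → 0 ≤ m f) ∧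
    ∀ (g : G) (f : lp (fun _ : G => ℝ) ∞),
      m ⟨fun x => f (g⁻¹ * x), translate_memℓp g f⟩ = m f

/-- A monoid is torsion-free if its only element of finite order is `1`
(the definition of `Monoid.IsTorsionFree` in the older Mathlib, since removed). -/
def Monoid.IsTorsionFree (G : Type*) [Monoid G] : Prop :=
  ∀ g : G, g ≠ 1 → ¬IsOfFinOrder g

open Finset
open scoped Pointwise

section Aux
variable {G : Type*} [Group G]

private lemma sum_shift [DecidableEq G] {M : Type*} [AddCommMonoid M] (f : G → M)
    (B T : Finset G) (g : G) (h0 : ∀ y, y ∉ B → f y = 0) (hT : ∀ y ∈ B, g * y ∈ T) :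
    ∑ x ∈ T, f (g⁻¹ * x) = ∑ y ∈ B, f y := by
  have himg : B.image (fun y => g * y) ⊆ T := by
    intro x hx
    obtain ⟨y, hy, rfl⟩ := Finset.mem_image.mp hx
    exact hT y hy
  rw [← Finset.sum_subset himg]
  · rw [Finset.sum_image (by intro a _ b _ h; exact mul_left_cancel h)]
    simp
  · intro x _ hx
    apply h0
    intro hmem
    exact hx (Finset.mem_image.mpr ⟨g⁻¹ * x, hmem, by group⟩)

private lemma exists_abs_ne (hG : Monoid.IsTorsionFree G) {k : G} (hk : k ≠ 1)
    (β : MonoidAlgebra ℂ G) (hβ : β ≠ 0) :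
    ∃ y, ‖β.coeff (k * y)‖ ≠ ‖β.coeff y‖ := by
  by_contra hcon
  push_neg at hcon
  obtain ⟨y₀, hy₀⟩ := Finsupp.support_nonempty_iff.mpr (mt MonoidAlgebra.coeff_eq_zero.mp hβ)
  have hmem : ∀ n : ℕ, k ^ n * y₀ ∈ β.coeff.support := by
    intro n
    induction n with
    | zero => simpa using hy₀
    | succ n ih =>
      have : ‖β.coeff (k * (k ^ n * y₀))‖ = ‖β.coeff (k ^ n * y₀)‖ := hcon _
      rw [Finsupp.mem_support_iff] at ih ⊢
      intro hz
      rw [show k ^ (n+1) * y₀ = k * (k ^ n * y₀) by group] at hz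
      rw [hz] at this
      simp at this
      exact ih (norm_eq_zero.mp this.symm)
  have hinj : Function.Injective (fun n : ℕ => k ^ n * y₀) := by
    intro m n h
    simp only at h
    have := mul_right_cancel h
    exact injective_pow_iff_not_isOfFinOrder.mpr (hG k hk) this
  have : (↑β.coeff.support : Set G).Infinite :=
    Set.infinite_of_injective_forall_mem hinj (fun n => by simpa using hmem n)
  exact this (β.coeff.support.finite_toSet)

private lemma J_lt_N [DecidableEq G] (hG : Monoid.IsTorsionFree G) {g h : G} (hgh : g ≠ h)
    (β : MonoidAlgebra ℂ G) (hβ : β ≠ 0) (T : Finset G)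
    (hgT : ∀ y ∈ β.coeff.support, g * y ∈ T) (hhT : ∀ y ∈ β.coeff.support, h * y ∈ T) :
    ∑ x ∈ T, ‖β.coeff (g⁻¹ * x)‖ * ‖β.coeff (h⁻¹ * x)‖ <
      ∑ y ∈ β.coeff.support, ‖β.coeff y‖ ^ 2 := by
  set f : G → ℝ := fun y => ‖β.coeff y‖ with hf
  have hzero : ∀ y, y ∉ β.coeff.support → f y ^ 2 = 0 := by
    intro y hy
    rw [Finsupp.notMem_support_iff] at hy
    simp [hf, hy]
  have hg2 : ∑ x ∈ T, f (g⁻¹ * x) ^ 2 = ∑ y ∈ β.coeff.support, f y ^ 2 :=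
    sum_shift (fun y => f y ^ 2) β.coeff.support T g hzero hgT
  have hh2 : ∑ x ∈ T, f (h⁻¹ * x) ^ 2 = ∑ y ∈ β.coeff.support, f y ^ 2 :=
    sum_shift (fun y => f y ^ 2) β.coeff.support T h hzero hhT
  have key : ∑ x ∈ T, (f (g⁻¹ * x) - f (h⁻¹ * x)) ^ 2 / 2
      = ∑ y ∈ β.coeff.support, f y ^ 2 - ∑ x ∈ T, f (g⁻¹ * x) * f (h⁻¹ * x) := by
    have : ∀ x ∈ T, (f (g⁻¹ * x) - f (h⁻¹ * x)) ^ 2 / 2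
        = (f (g⁻¹ * x) ^ 2 / 2 + f (h⁻¹ * x) ^ 2 / 2) - f (g⁻¹ * x) * f (h⁻¹ * x) := by
      intro x _; ring
    rw [Finset.sum_congr rfl this, Finset.sum_sub_distrib, Finset.sum_add_distrib,
      ← Finset.sum_div, ← Finset.sum_div, hg2, hh2]
    ring
  have hk : h⁻¹ * g ≠ 1 := fun hc => hgh (inv_mul_eq_one.mp hc).symm
  obtain ⟨y, hy⟩ := exists_abs_ne hG hk β hβ
  have hy' : f (h⁻¹ * g * y) ≠ f y := hy
  have hx : g * y ∈ T := by
    by_cases hyB : y ∈ β.coeff.support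
    · exact hgT y hyB
    · have hfy : f y = 0 := by
        rw [Finsupp.notMem_support_iff] at hyB; simp [hf, hyB]
      have hne0 : f (h⁻¹ * g * y) ≠ 0 := fun hc => hy' (by rw [hc, hfy])
      have hmem : h⁻¹ * g * y ∈ β.coeff.support := by
        rw [Finsupp.mem_support_iff]
        intro hc
        exact hne0 (by simp [hf, hc])
      have := hhT _ hmem
      rwa [show h * (h⁻¹ * g * y) = g * y by group] at this
  have hterm : 0 < (f (g⁻¹ * (g * y)) - f (h⁻¹ * (g * y))) ^ 2 / 2 := by
    have hne : f (g⁻¹ * (g * y)) - f (h⁻¹ * (g * y)) ≠ 0 := by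
      rw [show g⁻¹ * (g * y) = y by group, show h⁻¹ * (g * y) = h⁻¹ * g * y by group]
      intro hc
      exact hy' (by linarith [sub_eq_zero.mp hc])
    have h2 : 0 < (f (g⁻¹ * (g * y)) - f (h⁻¹ * (g * y))) ^ 2 :=
      lt_of_le_of_ne (sq_nonneg _) (Ne.symm (pow_ne_zero 2 hne))
    linarith
  have hpos : 0 < ∑ x ∈ T, (f (g⁻¹ * x) - f (h⁻¹ * x)) ^ 2 / 2 :=
    Finset.sum_pos' (fun x _ => by positivity) ⟨g * y, hx, hterm⟩
  rw [key] at hpos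
  linarith


end Aux

/-- If `α ≠ 0` in `ℂG` for a torsion-free group `G` satisfies `2‖α‖₂² ≥ ‖α‖₁²`,
then `α` is regular. -/
theorem stmt_0 {G : Type*} [Group G] (hG : Monoid.IsTorsionFree G)
    (α : MonoidAlgebra ℂ G) (hα : α ≠ 0)
    (h : 2 * ∑ g ∈ α.coeff.support, ‖α.coeff g‖ ^ 2 ≥
      (∑ g ∈ α.coeff.support, ‖α.coeff g‖) ^ 2) :
    ∀ β : MonoidAlgebra ℂ G, β ≠ 0 → α * β ≠ 0 := by
    classical
  intro β hβ hαβ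
  obtain ⟨y₀, hy₀⟩ := Finsupp.support_nonempty_iff.mpr (mt MonoidAlgebra.coeff_eq_zero.mp hβ)
  have hx : ∀ x : G, ∑ g ∈ α.coeff.support, α.coeff g * β.coeff (g⁻¹ * x) = 0 := by
    intro x
    have h0 : (α * β).coeff x = 0 := by rw [hαβ]; rfl
    rwa [MonoidAlgebra.coeff_mul_apply_left, Finsupp.sum] at h0
  -- singleton case
  by_cases hsing : ∃ a, α.coeff.support = {a}
  · obtain ⟨a, ha⟩ := hsing
    have := hx (a * y₀)
    rw [ha, Finset.sum_singleton, show a⁻¹ * (a * y₀) = y₀ by group] at this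
    have ha' : α.coeff a ≠ 0 := by
      have : a ∈ α.coeff.support := by rw [ha]; exact Finset.mem_singleton_self a
      exact Finsupp.mem_support_iff.mp this
    exact Finsupp.mem_support_iff.mp hy₀ (by
      rcases mul_eq_zero.mp this with h1 | h1
      · exact absurd h1 ha'
      · exact h1)
  -- general case
  set T : Finset G := α.coeff.support * β.coeff.support with hT
  have hmemT : ∀ g ∈ α.coeff.support, ∀ y ∈ β.coeff.support, g * y ∈ T := fun g hg y hy =>
    Finset.mul_mem_mul hg hy
  set N : ℝ := ∑ y ∈ β.coeff.support, ‖β.coeff y‖ ^ 2 with hNdef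
  have hN : 0 < N :=
    Finset.sum_pos (fun y hy => pow_pos (norm_pos_iff.mpr (Finsupp.mem_support_iff.mp hy)) 2)
      ⟨y₀, hy₀⟩
  have hAne : α.coeff.support.Nonempty := Finsupp.support_nonempty_iff.mpr (mt MonoidAlgebra.coeff_eq_zero.mp hα)
  have hA2 : 1 < α.coeff.support.card := by
    rcases Nat.lt_or_ge 1 α.coeff.support.card with h' | h'
    · exact h'
    · exfalso
      have : α.coeff.support.card = 1 := le_antisymm h' (Finset.card_pos.mpr hAne)
      exact hsing (Finset.card_eq_one.mp this)
  have herase : ∀ g ∈ α.coeff.support, (α.coeff.support.erase g).Nonempty := by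
    intro g hg
    rw [← Finset.card_pos, Finset.card_erase_of_mem hg]
    omega
  -- the big expansion
  have hsum : (0:ℂ) = ∑ g ∈ α.coeff.support, ∑ h' ∈ α.coeff.support,
      (α.coeff g * (starRingEnd ℂ) (α.coeff h')) *
        ∑ x ∈ T, β.coeff (g⁻¹ * x) * (starRingEnd ℂ) (β.coeff (h'⁻¹ * x)) := by
    have e1 : ∀ x ∈ T, (0:ℂ) = ∑ g ∈ α.coeff.support, ∑ h' ∈ α.coeff.support,
        (α.coeff g * (starRingEnd ℂ) (α.coeff h')) * (β.coeff (g⁻¹ * x) * (starRingEnd ℂ) (β.coeff (h'⁻¹ * x))) := by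
      intro x _
      calc (0:ℂ) = (∑ g ∈ α.coeff.support, α.coeff g * β.coeff (g⁻¹ * x)) *
            (starRingEnd ℂ) (∑ h' ∈ α.coeff.support, α.coeff h' * β.coeff (h'⁻¹ * x)) := by
            rw [hx x]; simp
        _ = _ := by
            rw [map_sum, Finset.sum_mul_sum]
            refine Finset.sum_congr rfl fun g _ => Finset.sum_congr rfl fun h' _ => ?_
            rw [map_mul (starRingEnd ℂ)]; ring
    calc (0:ℂ) = ∑ x ∈ T, (0:ℂ) := by simp
      _ = ∑ x ∈ T, ∑ g ∈ α.coeff.support, ∑ h' ∈ α.coeff.support,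
          (α.coeff g * (starRingEnd ℂ) (α.coeff h')) * (β.coeff (g⁻¹ * x) * (starRingEnd ℂ) (β.coeff (h'⁻¹ * x))) :=
          Finset.sum_congr rfl e1
      _ = _ := by
          rw [Finset.sum_comm]
          refine Finset.sum_congr rfl fun g _ => ?_
          rw [Finset.sum_comm]
          refine Finset.sum_congr rfl fun h' _ => ?_
          rw [← Finset.mul_sum]
  -- diagonal inner sums
  have hIdiag : ∀ g ∈ α.coeff.support,
      ∑ x ∈ T, β.coeff (g⁻¹ * x) * (starRingEnd ℂ) (β.coeff (g⁻¹ * x)) = (N : ℂ) := by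
    intro g hg
    rw [sum_shift (fun y => β.coeff y * (starRingEnd ℂ) (β.coeff y)) β.coeff.support T g
      (fun y hy => by simp [Finsupp.notMem_support_iff.mp hy])
      (fun y hy => hmemT g hg y hy)]
    simp only [Complex.mul_conj]
    rw [← Complex.ofReal_sum]
    norm_cast
    exact Finset.sum_congr rfl fun y _ => by rw [← Complex.sq_norm]
  -- real part
  have hre : (0:ℝ) = ∑ g ∈ α.coeff.support, ∑ h' ∈ α.coeff.support,
      ((α.coeff g * (starRingEnd ℂ) (α.coeff h')) *
        ∑ x ∈ T, β.coeff (g⁻¹ * x) * (starRingEnd ℂ) (β.coeff (h'⁻¹ * x))).re := by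
    have := congrArg Complex.re hsum
    simpa [Complex.re_sum] using this
  -- split diagonal
  have hsplit : (0:ℝ) = (∑ g ∈ α.coeff.support, ‖α.coeff g‖ ^ 2) * N +
      ∑ g ∈ α.coeff.support, ∑ h' ∈ α.coeff.support.erase g,
        ((α.coeff g * (starRingEnd ℂ) (α.coeff h')) *
          ∑ x ∈ T, β.coeff (g⁻¹ * x) * (starRingEnd ℂ) (β.coeff (h'⁻¹ * x))).re := by
    rw [hre]
    rw [Finset.sum_congr rfl (fun g hg => (Finset.add_sum_erase α.coeff.support _ hg).symm)]
    rw [Finset.sum_add_distrib]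
    congr 1
    rw [Finset.sum_mul]
    refine Finset.sum_congr rfl fun g hg => ?_
    rw [hIdiag g hg, Complex.mul_conj]
    rw [← Complex.ofReal_mul]
    rw [Complex.ofReal_re]
    rw [Complex.sq_norm]
  -- strict off-diagonal bound
  have hoff : ∑ g ∈ α.coeff.support, ∑ h' ∈ α.coeff.support.erase g,
      (-(‖α.coeff g‖ * ‖α.coeff h'‖ * N)) <
      ∑ g ∈ α.coeff.support, ∑ h' ∈ α.coeff.support.erase g,
        ((α.coeff g * (starRingEnd ℂ) (α.coeff h')) *
          ∑ x ∈ T, β.coeff (g⁻¹ * x) * (starRingEnd ℂ) (β.coeff (h'⁻¹ * x))).re := by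
    refine Finset.sum_lt_sum_of_nonempty hAne fun g hg => ?_
    refine Finset.sum_lt_sum_of_nonempty (herase g hg) fun h' hh' => ?_
    have hh'A : h' ∈ α.coeff.support := Finset.mem_of_mem_erase hh'
    have hne : g ≠ h' := fun hc => (Finset.ne_of_mem_erase hh') hc.symm
    set I : ℂ := ∑ x ∈ T, β.coeff (g⁻¹ * x) * (starRingEnd ℂ) (β.coeff (h'⁻¹ * x)) with hI
    have hIJ : ‖I‖ ≤ ∑ x ∈ T, ‖β.coeff (g⁻¹ * x)‖ * ‖β.coeff (h'⁻¹ * x)‖ := by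
      refine le_trans (norm_sum_le _ _) (le_of_eq ?_)
      exact Finset.sum_congr rfl fun x _ => by rw [norm_mul, Complex.norm_conj]
    have hJN : ∑ x ∈ T, ‖β.coeff (g⁻¹ * x)‖ * ‖β.coeff (h'⁻¹ * x)‖ < N :=
      J_lt_N hG hne β hβ T (fun y hy => hmemT g hg y hy) (fun y hy => hmemT h' hh'A y hy)
    have hc : 0 < ‖α.coeff g‖ * ‖α.coeff h'‖ :=
      mul_pos (norm_pos_iff.mpr (Finsupp.mem_support_iff.mp hg))
        (norm_pos_iff.mpr (Finsupp.mem_support_iff.mp hh'A))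
    have h1 : -(‖(α.coeff g * (starRingEnd ℂ) (α.coeff h')) * I‖) ≤
        ((α.coeff g * (starRingEnd ℂ) (α.coeff h')) * I).re :=
      (abs_le.mp (Complex.abs_re_le_norm _)).1
    have h2 : ‖(α.coeff g * (starRingEnd ℂ) (α.coeff h')) * I‖ =
        (‖α.coeff g‖ * ‖α.coeff h'‖) * ‖I‖ := by
      rw [norm_mul, norm_mul, Complex.norm_conj]
    nlinarith [norm_nonneg I]
  -- arithmetic on norms
  have hL : (∑ g ∈ α.coeff.support, ‖α.coeff g‖) ^ 2 =
      (∑ g ∈ α.coeff.support, ‖α.coeff g‖ ^ 2) +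
      ∑ g ∈ α.coeff.support, ∑ h' ∈ α.coeff.support.erase g, ‖α.coeff g‖ * ‖α.coeff h'‖ := by
    rw [sq, Finset.sum_mul_sum]
    rw [Finset.sum_congr rfl (fun g hg => (Finset.add_sum_erase α.coeff.support _ hg).symm)]
    rw [Finset.sum_add_distrib]
    congr 1
    exact Finset.sum_congr rfl fun g _ => (sq _).symm
  have hlow : ∑ g ∈ α.coeff.support, ∑ h' ∈ α.coeff.support.erase g,
      (-(‖α.coeff g‖ * ‖α.coeff h'‖ * N)) =
      -((∑ g ∈ α.coeff.support, ∑ h' ∈ α.coeff.support.erase g,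
        ‖α.coeff g‖ * ‖α.coeff h'‖) * N) := by
    rw [Finset.sum_mul, ← Finset.sum_neg_distrib]
    refine Finset.sum_congr rfl fun g _ => ?_
    rw [Finset.sum_mul, ← Finset.sum_neg_distrib]
  rw [hlow] at hoff
  nlinarith [hoff, hsplit, hL, hN, h]
end

section
/- Let G be a torsion-free group and let α be a nonzero element of the complex group algebra ℂG such that 2‖α‖₂² ≥ ‖α‖₁². Then α is not an analytical zero divisor: for every nonzero β ∈ ℓ²(G) one has αβ ≠ 0. -/
open scoped ENNReal

set_option maxHeartbeats 1600000 in
/-- If `α ≠ 0` in `ℂG` for a torsion-free group `G` satisfies `2‖α‖₂² ≥ ‖α‖₁²`,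
then `α` is not an analytical zero divisor. -/
theorem stmt_1 {G : Type*} [Group G] (hG : Monoid.IsTorsionFree G)
    (α : MonoidAlgebra ℂ G) (hα : α ≠ 0)
    (h : 2 * ∑ g ∈ α.coeff.support, ‖α.coeff g‖ ^ 2 ≥
      (∑ g ∈ α.coeff.support, ‖α.coeff g‖) ^ 2) :
    ∀ β : lp (fun _ : G => ℂ) 2, β ≠ 0 → smulL2 α β ≠ 0 := by
  classical
  intro β hβ hF
  set b : G → ℂ := fun x => β x with hbdef
  set A := α.coeff.support with hAdef
  -- square summability
  have hb2 : Summable fun x => ‖b x‖ ^ 2 := by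
    have h2 := (lp.memℓp β).summable (p := 2) (by norm_num)
    have : ∀ x : G, ‖b x‖ ^ ((2 : ℝ≥0∞).toReal) = ‖b x‖ ^ 2 := by
      intro x
      rw [ENNReal.toReal_ofNat, Real.rpow_two]
    simpa [this] using h2
  have hbt : ∀ g : G, Summable fun x => ‖b (g⁻¹ * x)‖ ^ 2 := by
    intro g
    have := ((Equiv.mulLeft g⁻¹).summable_iff (f := fun x => ‖b x‖ ^ 2)).2 hb2
    simpa [Function.comp_def] using this
  set c1 : ℝ := ∑' x, ‖b x‖ ^ 2 with hc1def
  have htt : ∀ g : G, ∑' x, ‖b (g⁻¹ * x)‖ ^ 2 = c1 := by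
    intro g
    exact (Equiv.mulLeft g⁻¹).tsum_eq (fun x => ‖b x‖ ^ 2)
  obtain ⟨x₀, hx₀⟩ : ∃ x, b x ≠ 0 := by
    by_contra hcon
    push_neg at hcon
    apply hβ
    apply lp.ext
    funext x
    simpa using hcon x
  have hc1pos : 0 < c1 := by
    have h0 : 0 < ‖b x₀‖ ^ 2 := pow_pos (norm_pos_iff.mpr hx₀) 2
    exact lt_of_lt_of_le h0 (Summable.le_tsum hb2 x₀ fun _ _ => by positivity)
  -- products of two ℓ² functions
  have hprod : ∀ g : G, Summable fun x => ‖b x‖ * ‖b (g⁻¹ * x)‖ := by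
    intro g
    refine Summable.of_nonneg_of_le (fun x => by positivity) (fun x => ?_)
      ((hb2.add (hbt g)).div_const 2)
    nlinarith [sq_nonneg (‖b x‖ - ‖b (g⁻¹ * x)‖)]
  have hsum : ∀ g : G, Summable fun x => (starRingEnd ℂ) (b x) * b (g⁻¹ * x) := by
    intro g
    apply Summable.of_norm
    simpa [norm_mul] using hprod g
  set c : G → ℂ := fun g => ∑' x, (starRingEnd ℂ) (b x) * b (g⁻¹ * x) with hcdef
  have hhalf : ∀ g : G, ∑' x, (‖b x‖ ^ 2 + ‖b (g⁻¹ * x)‖ ^ 2) / 2 = c1 := by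
    intro g
    rw [tsum_div_const, Summable.tsum_add hb2 (hbt g), htt g]
    ring
  have hsum_norm_le : ∀ g : G, ∑' x, ‖b x‖ * ‖b (g⁻¹ * x)‖ ≤ c1 := by
    intro g
    have h1 : ∑' x, ‖b x‖ * ‖b (g⁻¹ * x)‖ ≤ ∑' x, (‖b x‖ ^ 2 + ‖b (g⁻¹ * x)‖ ^ 2) / 2 :=
      Summable.tsum_le_tsum (fun x => by nlinarith [sq_nonneg (‖b x‖ - ‖b (g⁻¹ * x)‖)])
        (hprod g) ((hb2.add (hbt g)).div_const 2)
    exact h1.trans (le_of_eq (hhalf g))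
  have hc_le : ∀ g : G, ‖c g‖ ≤ c1 := by
    intro g
    have h1 : ‖c g‖ ≤ ∑' x, ‖(starRingEnd ℂ) (b x) * b (g⁻¹ * x)‖ :=
      norm_tsum_le_tsum_norm (by simpa [norm_mul] using hprod g)
    have h2 : ∑' x, ‖(starRingEnd ℂ) (b x) * b (g⁻¹ * x)‖ = ∑' x, ‖b x‖ * ‖b (g⁻¹ * x)‖ :=
      tsum_congr fun x => by simp [norm_mul]
    rw [h2] at h1
    exact h1.trans (hsum_norm_le g)
  have hconjmul : ∀ z : ℂ, (starRingEnd ℂ) z * z = ((‖z‖ ^ 2 : ℝ) : ℂ) := by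
    intro z
    rw [← Complex.normSq_eq_conj_mul_self]
    norm_cast
    rw [Complex.normSq_eq_norm_sq]
  have hc_one : c 1 = (c1 : ℂ) := by
    have e : ∀ x : G, (starRingEnd ℂ) (b x) * b ((1 : G)⁻¹ * x) = ((‖b x‖ ^ 2 : ℝ) : ℂ) := by
      intro x
      rw [inv_one, one_mul, hconjmul]
    calc c 1 = ∑' x, ((‖b x‖ ^ 2 : ℝ) : ℂ) := tsum_congr e
      _ = ((∑' x, ‖b x‖ ^ 2 : ℝ) : ℂ) := (Complex.ofRealCLM.map_tsum hb2).symm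
  -- key identity from smulL2 α β = 0
  have hF' : ∀ x, smulL2 α β x = 0 := fun x => congrFun hF x
  have key : ∀ hh : G, ∑ g ∈ A, α.coeff g * c (hh⁻¹ * g) = 0 := by
    intro hh
    have e1 : ∀ y, (starRingEnd ℂ) (b y) * smulL2 α β (hh * y)
        = ∑ g ∈ A, α.coeff g * ((starRingEnd ℂ) (b y) * b ((hh⁻¹ * g)⁻¹ * y)) := by
      intro y
      unfold smulL2
      rw [Finset.mul_sum]
      refine Finset.sum_congr rfl fun g hg => ?_
      have e : g⁻¹ * (hh * y) = (hh⁻¹ * g)⁻¹ * y := by group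
      rw [show (β : G → ℂ) (g⁻¹ * (hh * y)) = b ((hh⁻¹ * g)⁻¹ * y) by rw [hbdef]; rw [e]]
      ring
    have e2 : (∑' y, (starRingEnd ℂ) (b y) * smulL2 α β (hh * y)) = 0 := by
      simp [hF']
    rw [tsum_congr e1] at e2
    rw [Summable.tsum_finsetSum (fun g _ => ((hsum (hh⁻¹ * g)).mul_left (α.coeff g)))] at e2
    have e3 : ∀ g ∈ A, (∑' y, α.coeff g * ((starRingEnd ℂ) (b y) * b ((hh⁻¹ * g)⁻¹ * y)))
        = α.coeff g * c (hh⁻¹ * g) := fun g _ => tsum_mul_left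
    rw [Finset.sum_congr rfl e3] at e2
    exact e2
  set D : ℝ := ∑ g ∈ A, ‖α.coeff g‖ ^ 2 with hDdef
  set L : ℝ := ∑ g ∈ A, ‖α.coeff g‖ with hLdef
  set Off : ℂ := ∑ hh ∈ A, ∑ g ∈ A.erase hh, (starRingEnd ℂ) (α.coeff hh) * (α.coeff g * c (hh⁻¹ * g))
    with hOffdef
  have big : (D : ℂ) * (c1 : ℂ) + Off = 0 := by
    have h0 : ∑ hh ∈ A, (starRingEnd ℂ) (α.coeff hh) * ∑ g ∈ A, α.coeff g * c (hh⁻¹ * g) = 0 := by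
      refine Finset.sum_eq_zero fun hh _ => ?_
      rw [key hh, mul_zero]
    calc (D : ℂ) * (c1 : ℂ) + Off
        = ∑ hh ∈ A, ((starRingEnd ℂ) (α.coeff hh) * (α.coeff hh * c (hh⁻¹ * hh))
            + ∑ g ∈ A.erase hh, (starRingEnd ℂ) (α.coeff hh) * (α.coeff g * c (hh⁻¹ * g))) := by
          rw [Finset.sum_add_distrib]
          congr 1
          rw [hDdef, Complex.ofReal_sum, Finset.sum_mul]
          refine Finset.sum_congr rfl fun g _ => ?_
          rw [inv_mul_cancel, hc_one, ← mul_assoc, hconjmul]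
      _ = ∑ hh ∈ A, (starRingEnd ℂ) (α.coeff hh) * ∑ g ∈ A, α.coeff g * c (hh⁻¹ * g) := by
          refine Finset.sum_congr rfl fun hh hhA => ?_
          rw [Finset.mul_sum]
          exact Finset.add_sum_erase A (fun g => (starRingEnd ℂ) (α.coeff hh) * (α.coeff g * c (hh⁻¹ * g))) hhA
      _ = 0 := h0
  have habs : D * c1 = ‖Off‖ := by
    have hO : Off = -((D : ℂ) * (c1 : ℂ)) := by linear_combination big
    rw [hO, norm_neg, norm_mul, Complex.norm_real, Complex.norm_real,
      Real.norm_of_nonneg (by positivity), Real.norm_of_nonneg hc1pos.le]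
  set Sig : ℝ := ∑ hh ∈ A, ∑ g ∈ A.erase hh, ‖α.coeff hh‖ * ‖α.coeff g‖ * ‖c (hh⁻¹ * g)‖ with hSigdef
  have hOffle : ‖Off‖ ≤ Sig := by
    refine (norm_sum_le _ _).trans (Finset.sum_le_sum fun hh _ =>
      (norm_sum_le _ _).trans (Finset.sum_le_sum fun g _ => le_of_eq ?_))
    simp [norm_mul, mul_assoc]
  have hW : ∑ hh ∈ A, ∑ g ∈ A.erase hh, ‖α.coeff hh‖ * ‖α.coeff g‖ = L ^ 2 - D := by
    have e : ∀ hh ∈ A, ∑ g ∈ A.erase hh, ‖α.coeff hh‖ * ‖α.coeff g‖ = ‖α.coeff hh‖ * L - ‖α.coeff hh‖ ^ 2 := by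
      intro hh hhA
      rw [← Finset.mul_sum]
      have e2 : ‖α.coeff hh‖ + ∑ g ∈ A.erase hh, ‖α.coeff g‖ = L :=
        Finset.add_sum_erase A (fun g => ‖α.coeff g‖) hhA
      have e3 : ∑ g ∈ A.erase hh, ‖α.coeff g‖ = L - ‖α.coeff hh‖ := by linarith
      rw [e3]; ring
    rw [Finset.sum_congr rfl e, Finset.sum_sub_distrib, ← Finset.sum_mul, ← hLdef, ← hDdef]
    ring
  have hSig_le : Sig ≤ (L ^ 2 - D) * c1 := by
    rw [← hW, Finset.sum_mul]
    refine Finset.sum_le_sum fun hh _ => ?_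
    rw [Finset.sum_mul]
    refine Finset.sum_le_sum fun g _ => ?_
    have := hc_le (hh⁻¹ * g)
    have h1 : (0:ℝ) ≤ ‖α.coeff hh‖ * ‖α.coeff g‖ := by positivity
    nlinarith
  have hLD : L ^ 2 ≤ 2 * D := by
    have e1 : L = ∑ g ∈ A, ‖α.coeff g‖ :=
      Finset.sum_congr rfl fun g _ => rfl
    have e2 : D = ∑ g ∈ A, ‖α.coeff g‖ ^ 2 :=
      Finset.sum_congr rfl fun g _ => rfl
    rw [e1, e2]; exact h
  -- A nonempty, D > 0
  obtain ⟨h₀, hh₀⟩ := Finsupp.support_nonempty_iff.mpr (MonoidAlgebra.coeff_eq_zero.not.mpr hα)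
  have hDpos : 0 < D := by
    have h1 : (0:ℝ) < ‖α.coeff h₀‖ ^ 2 :=
      pow_pos (norm_pos_iff.mpr (Finsupp.mem_support_iff.mp hh₀)) 2
    exact lt_of_lt_of_le h1
      (Finset.single_le_sum (f := fun g => ‖α.coeff g‖ ^ 2) (fun g _ => by positivity) hh₀)
  -- find a nontrivial pair
  by_cases hsing : ∀ g ∈ A, g = h₀
  · have herase : ∀ hh ∈ A, A.erase hh = ∅ := by
      intro hh hhA
      ext g
      simp only [Finset.mem_erase, Finset.notMem_empty, iff_false, not_and]
      intro hg hgA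
      exact absurd ((hsing g hgA).trans (hsing hh hhA).symm) hg
    have hS0 : Sig = 0 := by
      rw [hSigdef]
      refine Finset.sum_eq_zero fun hh hhA => ?_
      rw [herase hh hhA, Finset.sum_empty]
    have := habs.le.trans (hOffle.trans_eq hS0)
    nlinarith
  · push_neg at hsing
    obtain ⟨g₀, hg₀A, hg₀⟩ := hsing
    -- equality throughout
    have hDc1_le : D * c1 ≤ Sig := habs.le.trans hOffle
    have hSig_eq : Sig = (L ^ 2 - D) * c1 := by
      have : (L ^ 2 - D) * c1 ≤ D * c1 := by nlinarith
      linarith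
    have hzero : ∑ hh ∈ A, ∑ g ∈ A.erase hh, ‖α.coeff hh‖ * ‖α.coeff g‖ * (c1 - ‖c (hh⁻¹ * g)‖) = 0 := by
      have expand : ∑ hh ∈ A, ∑ g ∈ A.erase hh, ‖α.coeff hh‖ * ‖α.coeff g‖ * (c1 - ‖c (hh⁻¹ * g)‖)
          = (∑ hh ∈ A, ∑ g ∈ A.erase hh, ‖α.coeff hh‖ * ‖α.coeff g‖) * c1 - Sig := by
        rw [hSigdef, Finset.sum_mul, ← Finset.sum_sub_distrib]
        refine Finset.sum_congr rfl fun hh _ => ?_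
        rw [Finset.sum_mul, ← Finset.sum_sub_distrib]
        exact Finset.sum_congr rfl fun g _ => by ring
      rw [expand, hW, hSig_eq]
      ring
    have hterm : ‖α.coeff h₀‖ * ‖α.coeff g₀‖ * (c1 - ‖c (h₀⁻¹ * g₀)‖) = 0 := by
      have hnn : ∀ hh ∈ A, (0:ℝ) ≤ ∑ g ∈ A.erase hh, ‖α.coeff hh‖ * ‖α.coeff g‖ * (c1 - ‖c (hh⁻¹ * g)‖) := by
        intro hh _
        refine Finset.sum_nonneg fun g _ => ?_
        have := hc_le (hh⁻¹ * g)
        have h1 : (0:ℝ) ≤ ‖α.coeff hh‖ * ‖α.coeff g‖ := by positivity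
        nlinarith
      have houter := (Finset.sum_eq_zero_iff_of_nonneg hnn).mp hzero h₀ hh₀
      have hnn2 : ∀ g ∈ A.erase h₀, (0:ℝ) ≤ ‖α.coeff h₀‖ * ‖α.coeff g‖ * (c1 - ‖c (h₀⁻¹ * g)‖) := by
        intro g _
        have := hc_le (h₀⁻¹ * g)
        have h1 : (0:ℝ) ≤ ‖α.coeff h₀‖ * ‖α.coeff g‖ := by positivity
        nlinarith
      exact (Finset.sum_eq_zero_iff_of_nonneg hnn2).mp houter g₀
        (Finset.mem_erase.mpr ⟨hg₀, hg₀A⟩)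
    set t : G := h₀⁻¹ * g₀ with htdef
    have heq : ‖c t‖ = c1 := by
      have h1 : 0 < ‖α.coeff h₀‖ := norm_pos_iff.mpr (Finsupp.mem_support_iff.mp hh₀)
      have h2 : 0 < ‖α.coeff g₀‖ := norm_pos_iff.mpr (Finsupp.mem_support_iff.mp hg₀A)
      have h3 : c1 - ‖c t‖ = 0 := by
        rcases mul_eq_zero.mp hterm with hz | hz
        · rcases mul_eq_zero.mp hz with hz' | hz'
          · exact absurd hz' h1.ne'
          · exact absurd hz' h2.ne'
        · exact hz
      linarith
    -- equality ∈ Cauchy–Schwarz forces |b (t⁻¹ x)| = |b x|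
    have hnorm_eq : ∀ x, ‖b (t⁻¹ * x)‖ = ‖b x‖ := by
      have hP1 : c1 ≤ ∑' x, ‖b x‖ * ‖b (t⁻¹ * x)‖ := by
        rw [← heq]
        have h1 : ‖c t‖ ≤ ∑' x, ‖(starRingEnd ℂ) (b x) * b (t⁻¹ * x)‖ :=
          norm_tsum_le_tsum_norm (by simpa [norm_mul] using hprod t)
        have h2 : ∑' x, ‖(starRingEnd ℂ) (b x) * b (t⁻¹ * x)‖ = ∑' x, ‖b x‖ * ‖b (t⁻¹ * x)‖ :=
          tsum_congr fun x => by simp [norm_mul]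
        rw [h2] at h1
        exact h1
      have hPeq : ∑' x, ‖b x‖ * ‖b (t⁻¹ * x)‖ = c1 := le_antisymm (hsum_norm_le t) hP1
      have hd_sum : Summable fun x => (‖b x‖ ^ 2 + ‖b (t⁻¹ * x)‖ ^ 2) / 2
          - ‖b x‖ * ‖b (t⁻¹ * x)‖ := ((hb2.add (hbt t)).div_const 2).sub (hprod t)
      have hd0 : ∑' x, ((‖b x‖ ^ 2 + ‖b (t⁻¹ * x)‖ ^ 2) / 2 - ‖b x‖ * ‖b (t⁻¹ * x)‖) = 0 := by
        rw [Summable.tsum_sub ((hb2.add (hbt t)).div_const 2) (hprod t), hhalf t, hPeq, sub_self]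
      intro x
      have hdx : (‖b x‖ ^ 2 + ‖b (t⁻¹ * x)‖ ^ 2) / 2 - ‖b x‖ * ‖b (t⁻¹ * x)‖
          ≤ ∑' y, ((‖b y‖ ^ 2 + ‖b (t⁻¹ * y)‖ ^ 2) / 2 - ‖b y‖ * ‖b (t⁻¹ * y)‖) :=
        Summable.le_tsum hd_sum x fun y _ => by nlinarith [sq_nonneg (‖b y‖ - ‖b (t⁻¹ * y)‖)]
      rw [hd0] at hdx
      nlinarith [sq_nonneg (‖b x‖ - ‖b (t⁻¹ * x)‖)]
    -- t has infinite order, so the orbit of x₀ is infinite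
    have ht1 : t ≠ 1 := by
      intro hcon
      apply hg₀
      rw [htdef] at hcon
      rw [← inv_mul_cancel h₀] at hcon
      exact mul_left_cancel hcon
    have hinj : Function.Injective fun n : ℤ => t ^ n :=
      injective_zpow_iff_not_isOfFinOrder.2 (hG t ht1)
    have hiter : ∀ n : ℕ, ‖b (t ^ (-(n : ℤ)) * x₀)‖ = ‖b x₀‖ := by
      intro n
      induction n with
      | zero => simp
      | succ k ih =>
        have e : t ^ (-((k : ℤ) + 1)) * x₀ = t⁻¹ * (t ^ (-(k : ℤ)) * x₀) := by
          rw [← mul_assoc, ← zpow_neg_one, ← zpow_add]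
          ring_nf
        push_cast
        rw [e, hnorm_eq]
        exact ih
    have hmapinj : Function.Injective fun n : ℕ => t ^ (-(n : ℤ)) * x₀ := by
      intro m n hmn
      simp only at hmn
      have h1 : t ^ (-(m : ℤ)) = t ^ (-(n : ℤ)) := mul_right_cancel hmn
      have h2 := hinj h1
      omega
    have hfin : {x : G | ‖b x₀‖ ^ 2 ≤ ‖b x‖ ^ 2}.Finite := by
      have hev : ∀ᶠ x in Filter.cofinite, ‖b x‖ ^ 2 < ‖b x₀‖ ^ 2 :=
        hb2.tendsto_cofinite_zero.eventually_lt_const (pow_pos (norm_pos_iff.mpr hx₀) 2)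
      have := Filter.eventually_cofinite.mp hev
      exact this.subset fun x hx => not_lt.mpr hx
    have hinf : {x : G | ‖b x₀‖ ^ 2 ≤ ‖b x‖ ^ 2}.Infinite :=
      Set.infinite_of_injective_forall_mem hmapinj fun n => by
        simp only [Set.mem_setOf_eq, hiter n, le_refl]
    exact hinf hfin
end

section
/- Let G be a group, let H be the subgroup of G generated by the support of an element α of the complex group algebra ℂH ⊆ ℂG (so α lies in the image of ℂH in ℂG). Then α is regular in ℂG if and only if α is regular in ℂH; equivalently, if α is a zero divisor in ℂG (there is a nonzero γ ∈ ℂG with αγ = 0), then there is a nonzero γ' ∈ ℂH with αγ' = 0, and conversely. -/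
open scoped ENNReal

/-- `α ∈ ℂG` is regular in `ℂG` iff it is regular in `ℂH`, where
`H = ⟨supp α⟩` and `α'` is the element of `ℂH` corresponding to `α`. -/
theorem stmt_2 {G : Type*} [Group G] (α : MonoidAlgebra ℂ G)
    (H : Subgroup G) (hH : H = Subgroup.closure (α.coeff.support : Set G))
    (α' : MonoidAlgebra ℂ H)
    (hα' : Finsupp.mapDomain (Subtype.val : H → G) α'.coeff = α.coeff) :
    (∀ β : MonoidAlgebra ℂ G, β ≠ 0 → α * β ≠ 0) ↔
      (∀ γ : MonoidAlgebra ℂ H, γ ≠ 0 → α' * γ ≠ 0) := by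
  constructor
  · intro hreg γ hγ hcontra
    set F : MonoidAlgebra ℂ H →+* MonoidAlgebra ℂ G :=
      MonoidAlgebra.mapDomainRingHom ℂ H.subtype with hF
    have hFeq : ∀ δ : MonoidAlgebra ℂ H, F δ = MonoidAlgebra.ofCoeff (Finsupp.mapDomain (Subtype.val : H → G) δ.coeff) :=
      fun δ => rfl
    have hmap : F (α' * γ) = α * F γ := by
      rw [map_mul, hFeq, hα', MonoidAlgebra.ofCoeff_coeff]
    have hγ' : F γ ≠ 0 := by
      intro h
      rw [hFeq] at h
      exact hγ (MonoidAlgebra.coeff_injective (Finsupp.mapDomain_injective Subtype.val_injective (by simpa using h)))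
    exact hreg _ hγ' (by rw [← hmap, hcontra, map_zero])
  · intro hreg β hβ hcontra
    obtain ⟨x, hx⟩ := Finsupp.ne_iff.mp (MonoidAlgebra.coeff_injective.ne hβ)
    set β' : MonoidAlgebra ℂ G := β * MonoidAlgebra.single x⁻¹ 1 with hβ'def
    have hβ'apply : ∀ g : G, β'.coeff g = β.coeff (g * x) := by
      intro g
      rw [hβ'def, MonoidAlgebra.coeff_mul_single_apply]
      simp
    have hαβ' : α * β' = 0 := by rw [hβ'def, ← mul_assoc, hcontra, zero_mul]
    set γ : MonoidAlgebra ℂ H :=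
      MonoidAlgebra.ofCoeff (Finsupp.comapDomain (Subtype.val : H → G) β'.coeff (Subtype.val_injective.injOn)) with hγdef
    have hγapply : ∀ h : H, γ.coeff h = β'.coeff (h : G) := fun h => rfl
    have hγ : γ ≠ 0 := by
      intro h0
      apply hx
      have : γ.coeff 1 = 0 := by rw [h0]; rfl
      rw [hγapply, hβ'apply] at this
      simpa using this
    apply hreg γ hγ
    ext h
    have key : (α' * γ).coeff h = (α * β').coeff (↑h) := by
      rw [MonoidAlgebra.coeff_mul_apply_left, MonoidAlgebra.coeff_mul_apply_left, ← hα',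
        Finsupp.sum_mapDomain_index_inj Subtype.val_injective]
      refine Finsupp.sum_congr fun a _ => ?_
      rw [hγapply]
      norm_num
    rw [key, hαβ']
    rfl
end

section
/- Let N be a normal subgroup of a group G such that every nonzero element of ℂN is regular in ℂN. Let t ∈ G be an element whose image tN in the quotient group G/N has infinite order. Then for all nonzero α, β ∈ ℂN, the element α + βt is regular in ℂG (where α, β are viewed in ℂG via the embedding ℂN ↪ ℂG). -/
open scoped ENNReal

/-- The natural embedding of `ℂN` into `ℂG` for a subgroup `N ≤ G`. -/
noncomputable def embCG {G : Type*} [Group G] (N : Subgroup G) (α : MonoidAlgebra ℂ N) :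
    MonoidAlgebra ℂ G :=
  MonoidAlgebra.ofCoeff (Finsupp.mapDomain (Subtype.val : N → G) α.coeff)

section aux
variable {G : Type*} [Group G] {N : Subgroup G}

lemma embCG_injective : Function.Injective (embCG N (G := G)) :=
  MonoidAlgebra.mapDomain_injective Subtype.val_injective

lemma embCG_mul (a b : MonoidAlgebra ℂ N) : embCG N (a * b) = embCG N a * embCG N b :=
  MonoidAlgebra.mapDomain_mul (N.subtype) a b

lemma embCG_support {a : MonoidAlgebra ℂ N} {x : G} (hx : x ∈ (embCG N a).coeff.support) : x ∈ N := by
  classical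
  have := Finsupp.mapDomain_support (f := (Subtype.val : N → G)) (s := a.coeff) hx
  simp only [Finset.mem_image] at this
  obtain ⟨n, -, rfl⟩ := this
  exact n.2

lemma of_mul_of_inv (g : G) : (MonoidAlgebra.of ℂ G g) * (MonoidAlgebra.of ℂ G g⁻¹) = 1 := by
  rw [← map_mul, mul_inv_cancel, map_one]

lemma mul_of_ne_zero {f : MonoidAlgebra ℂ G} (hf : f ≠ 0) (g : G) :
    f * MonoidAlgebra.of ℂ G g ≠ 0 := by
  intro h
  apply hf
  have : f * (MonoidAlgebra.of ℂ G g * MonoidAlgebra.of ℂ G g⁻¹) = 0 := by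
    rw [← mul_assoc, h, zero_mul]
  rwa [of_mul_of_inv, mul_one] at this

lemma of_mul_ne_zero {f : MonoidAlgebra ℂ G} (hf : f ≠ 0) (g : G) :
    MonoidAlgebra.of ℂ G g * f ≠ 0 := by
  intro h
  apply hf
  have : (MonoidAlgebra.of ℂ G g⁻¹ * MonoidAlgebra.of ℂ G g) * f = 0 := by
    rw [mul_assoc, h, mul_zero]
  rwa [← map_mul, inv_mul_cancel, map_one, one_mul] at this

/-- Pulling back an element supported in a single coset. -/
lemma coset_factor [N.Normal] (δ : MonoidAlgebra ℂ G) (g₀ : G)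
    (hδ : ∀ x ∈ δ.coeff.support, (QuotientGroup.mk x : G ⧸ N) = QuotientGroup.mk g₀) :
    ∃ μ : MonoidAlgebra ℂ N, δ = embCG N μ * MonoidAlgebra.of ℂ G g₀ := by
  classical
  have hsupp : ∀ x ∈ (δ * MonoidAlgebra.of ℂ G g₀⁻¹).coeff.support, x ∈ N := by
    intro x hx
    have := MonoidAlgebra.support_coeff_mul_subset δ (MonoidAlgebra.of ℂ G g₀⁻¹) hx
    rw [Finset.mem_mul] at this
    obtain ⟨y, hy, z, hz, rfl⟩ := this
    have hz' : z = g₀⁻¹ := Finset.mem_singleton.mp (Finsupp.support_single_subset hz)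
    subst hz'
    have hy' := hδ y hy
    have h1 : (y : G)⁻¹ * g₀ ∈ N := (QuotientGroup.eq).mp hy'
    have h2 : g₀ * (y : G)⁻¹ ∈ N := by
      simpa [mul_assoc] using Subgroup.Normal.conj_mem ‹N.Normal› _ h1 y
    simpa using N.inv_mem h2
  refine ⟨MonoidAlgebra.ofCoeff (Finsupp.subtypeDomain (· ∈ N) (δ * MonoidAlgebra.of ℂ G g₀⁻¹).coeff), ?_⟩
  have key : embCG N (MonoidAlgebra.ofCoeff (Finsupp.subtypeDomain (· ∈ N) (δ * MonoidAlgebra.of ℂ G g₀⁻¹).coeff))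
      = δ * MonoidAlgebra.of ℂ G g₀⁻¹ := by
    ext x
    by_cases hx : x ∈ N
    · have : x = Subtype.val (⟨x, hx⟩ : N) := rfl
      rw [this, embCG, MonoidAlgebra.coeff_ofCoeff, MonoidAlgebra.coeff_ofCoeff, Finsupp.mapDomain_apply Subtype.val_injective]
      rfl
    · rw [Finsupp.notMem_support_iff.mp (fun h => hx (embCG_support h))]
      exact (Finsupp.notMem_support_iff.mp (fun h => hx (hsupp x h))).symm
  rw [key, mul_assoc, ← map_mul, inv_mul_cancel, map_one, mul_one]

end aux

/-- If `N ⊴ G` has only regular nonzero elements in `ℂN` and `tN` has infinite order in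
`G/N`, then `α + βt` is regular in `ℂG` for all nonzero `α, β ∈ ℂN`. -/
theorem stmt_5 {G : Type*} [Group G] (N : Subgroup G) [N.Normal]
    (hN : ∀ α : MonoidAlgebra ℂ N, α ≠ 0 → ∀ β : MonoidAlgebra ℂ N, β ≠ 0 → α * β ≠ 0)
    (t : G) (ht : ¬ IsOfFinOrder (QuotientGroup.mk t : G ⧸ N))
    (α β : MonoidAlgebra ℂ N) (hα : α ≠ 0) (hβ : β ≠ 0) :
    ∀ γ : MonoidAlgebra ℂ G, γ ≠ 0 →
      (embCG N α +
        embCG N β *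
          MonoidAlgebra.of ℂ G t) * γ ≠ 0 := by
  classical
  intro γ hγ
  set tb : G ⧸ N := QuotientGroup.mk t with htb
  set S : Finset (G ⧸ N) := γ.coeff.support.image (QuotientGroup.mk) with hSdef
  have hS : S.Nonempty :=
    (γ.coeff.support.image_nonempty).mpr (Finsupp.support_nonempty_iff.mpr (mt MonoidAlgebra.coeff_eq_zero.mp hγ))
  have hex : ∃ d ∈ S, tb * d ∉ S := by
    by_contra h
    push_neg at h
    obtain ⟨d₀, hd₀⟩ := hS
    have hmem : ∀ n : ℕ, tb ^ n * d₀ ∈ S := by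
      intro n
      induction n with
      | zero => simpa using hd₀
      | succ n ih =>
        have := h _ ih
        rwa [← mul_assoc, ← pow_succ'] at this
    have hinj : Function.Injective fun n : ℕ => tb ^ n * d₀ := by
      intro m n hmn
      have h2 : tb ^ m = tb ^ n := by
        have : tb ^ m * d₀ = tb ^ n * d₀ := hmn
        exact mul_right_cancel this
      exact injective_pow_iff_not_isOfFinOrder.mpr ht h2
    exact (Set.infinite_of_injective_forall_mem hinj (fun n => hmem n)) S.finite_toSet
  obtain ⟨d, hdS, hdtS⟩ := hex
  obtain ⟨g, hg, hgd⟩ := Finset.mem_image.mp hdS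
  set γd : MonoidAlgebra ℂ G := MonoidAlgebra.ofCoeff (γ.coeff.filter (fun x => (QuotientGroup.mk x : G ⧸ N) = d)) with hγddef
  set γc : MonoidAlgebra ℂ G := MonoidAlgebra.ofCoeff (γ.coeff.filter (fun x => ¬ (QuotientGroup.mk x : G ⧸ N) = d))
    with hγcdef
  have hγsplit : γd + γc = γ := MonoidAlgebra.coeff_injective (Finsupp.filter_pos_add_filter_neg γ.coeff _)
  have hγdg : γd.coeff g = γ.coeff g := by
    rw [hγddef, MonoidAlgebra.coeff_ofCoeff, Finsupp.filter_apply, if_pos hgd]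
  have hγdne : γd ≠ 0 := by
    intro h
    exact (Finsupp.mem_support_iff.mp hg) (by rw [← hγdg, h]; rfl)
  -- factor `of t * γd` through ℂN
  have hδsupp : ∀ x ∈ (MonoidAlgebra.of ℂ G t * γd).coeff.support,
      (QuotientGroup.mk x : G ⧸ N) = QuotientGroup.mk (t * g) := by
    intro x hx
    have := MonoidAlgebra.support_coeff_mul_subset (MonoidAlgebra.of ℂ G t) γd hx
    rw [Finset.mem_mul] at this
    obtain ⟨y, hy, z, hz, rfl⟩ := this
    have hy' : y = t := Finset.mem_singleton.mp (Finsupp.support_single_subset hy)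
    subst hy'
    have hz' : (QuotientGroup.mk z : G ⧸ N) = d := by
      by_contra hc
      have h0 := Finsupp.mem_support_iff.mp hz
      rw [hγddef, MonoidAlgebra.coeff_ofCoeff, Finsupp.filter_apply, if_neg hc] at h0
      exact h0 rfl
    have hgq : (QuotientGroup.mk g : G ⧸ N) = d := hgd
    rw [QuotientGroup.mk_mul, QuotientGroup.mk_mul, hz', hgq]
  obtain ⟨μ, hμ⟩ := coset_factor (MonoidAlgebra.of ℂ G t * γd) (t * g) hδsupp
  have hμne : μ ≠ 0 := by
    intro h
    apply of_mul_ne_zero hγdne t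
    rw [hμ, h]
    simp [embCG]
  have hBγd : embCG N β * (MonoidAlgebra.of ℂ G t * γd)
      = embCG N (β * μ) * MonoidAlgebra.of ℂ G (t * g) := by
    rw [hμ, embCG_mul, mul_assoc]
  have hBne : embCG N β * (MonoidAlgebra.of ℂ G t * γd) ≠ 0 := by
    rw [hBγd]
    refine mul_of_ne_zero ?_ _
    intro h
    exact hN β hβ μ hμne (embCG_injective (by simpa [embCG] using h))
  obtain ⟨x, hx⟩ : ∃ x, (embCG N β * (MonoidAlgebra.of ℂ G t * γd)).coeff x ≠ 0 := by
    by_contra h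
    push_neg at h
    exact hBne (MonoidAlgebra.ext (Finsupp.ext h))
  -- x lies in the coset tb * d
  have hxq : (QuotientGroup.mk x : G ⧸ N) = tb * d := by
    have hxs : x ∈ (embCG N (β * μ) * MonoidAlgebra.of ℂ G (t * g)).coeff.support := by
      rw [← hBγd]
      exact Finsupp.mem_support_iff.mpr hx
    have := MonoidAlgebra.support_coeff_mul_subset (embCG N (β * μ)) (MonoidAlgebra.of ℂ G (t * g)) hxs
    rw [Finset.mem_mul] at this
    obtain ⟨y, hy, z, hz, rfl⟩ := this
    have hz' : z = t * g := Finset.mem_singleton.mp (Finsupp.support_single_subset hz)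
    subst hz'
    have hyN : y ∈ N := embCG_support hy
    have hy1 : (QuotientGroup.mk y : G ⧸ N) = 1 := (QuotientGroup.eq_one_iff y).mpr hyN
    rw [QuotientGroup.mk_mul, QuotientGroup.mk_mul, hy1, one_mul, htb, hgd]
  -- the α-part vanishes at x
  have hterm1 : (embCG N α * γ).coeff x = 0 := by
    rw [MonoidAlgebra.coeff_mul]
    simp only [Finsupp.sum]
    refine Finset.sum_eq_zero fun a₁ ha₁ => Finset.sum_eq_zero fun a₂ ha₂ => ?_
    rw [if_neg]
    intro heq
    have ha₁N : a₁ ∈ N := embCG_support ha₁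
    have ha₂q : (QuotientGroup.mk a₂ : G ⧸ N) ∈ S := Finset.mem_image_of_mem _ ha₂
    have : (QuotientGroup.mk a₂ : G ⧸ N) = tb * d := by
      have h1 : (QuotientGroup.mk a₁ : G ⧸ N) = 1 := (QuotientGroup.eq_one_iff a₁).mpr ha₁N
      have : (QuotientGroup.mk (a₁ * a₂) : G ⧸ N) = tb * d := by rw [heq, hxq]
      rwa [QuotientGroup.mk_mul, h1, one_mul] at this
    rw [this] at ha₂q
    exact hdtS ha₂q
  -- the β-part at x reduces to the γd part
  have hterm2 : (embCG N β * MonoidAlgebra.of ℂ G t * γc).coeff x = 0 := by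
    rw [MonoidAlgebra.coeff_mul]
    simp only [Finsupp.sum]
    refine Finset.sum_eq_zero fun a₁ ha₁ => Finset.sum_eq_zero fun a₂ ha₂ => ?_
    rw [if_neg]
    intro heq
    have ha₁q : (QuotientGroup.mk a₁ : G ⧸ N) = tb := by
      have := MonoidAlgebra.support_coeff_mul_subset (embCG N β) (MonoidAlgebra.of ℂ G t) ha₁
      rw [Finset.mem_mul] at this
      obtain ⟨y, hy, z, hz, rfl⟩ := this
      have hz' : z = t := Finset.mem_singleton.mp (Finsupp.support_single_subset hz)
      subst hz'
      have hy1 : (QuotientGroup.mk y : G ⧸ N) = 1 :=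
        (QuotientGroup.eq_one_iff y).mpr (embCG_support hy)
      rw [QuotientGroup.mk_mul, hy1, one_mul, htb]
    have ha₂q : (QuotientGroup.mk a₂ : G ⧸ N) ≠ d := by
      intro hc
      have h0 : γc.coeff a₂ = 0 := by
        rw [hγcdef, MonoidAlgebra.coeff_ofCoeff, Finsupp.filter_apply, if_neg (not_not_intro hc)]
      exact (Finsupp.mem_support_iff.mp ha₂) h0
    apply ha₂q
    have : (QuotientGroup.mk (a₁ * a₂) : G ⧸ N) = tb * d := by rw [heq, hxq]
    rw [QuotientGroup.mk_mul, ha₁q] at this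
    exact mul_left_cancel this
  intro hzero
  have hsplit2 : (embCG N α + embCG N β * MonoidAlgebra.of ℂ G t) * γ
      = embCG N α * γ + (embCG N β * (MonoidAlgebra.of ℂ G t * γd)
        + embCG N β * MonoidAlgebra.of ℂ G t * γc) := by
    rw [add_mul]
    congr 1
    calc embCG N β * MonoidAlgebra.of ℂ G t * γ
        = embCG N β * MonoidAlgebra.of ℂ G t * (γd + γc) := by rw [hγsplit]
      _ = embCG N β * MonoidAlgebra.of ℂ G t * γd
          + embCG N β * MonoidAlgebra.of ℂ G t * γc := mul_add _ _ _
      _ = embCG N β * (MonoidAlgebra.of ℂ G t * γd)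
          + embCG N β * MonoidAlgebra.of ℂ G t * γc := by rw [mul_assoc]
  have hx0 : ((embCG N α + embCG N β * MonoidAlgebra.of ℂ G t) * γ).coeff x = 0 := by
    rw [hzero]; rfl
  rw [hsplit2] at hx0
  rw [MonoidAlgebra.coeff_add, MonoidAlgebra.coeff_add, Finsupp.add_apply, Finsupp.add_apply, hterm1, hterm2, zero_add, add_zero] at hx0
  exact hx hx0
end

section
/- Let G be a group, let g ∈ G be an element of infinite order, and let a, b be nonzero complex numbers. Then a·1 + b·g ∈ ℂG is not an analytical zero divisor: there is no nonzero γ ∈ ℓ²(G) with (a·1 + b·g)γ = 0. -/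
open scoped ENNReal

lemma aux_no_growth {G : Type*} [Group G] (h : G) (hh : ¬ IsOfFinOrder h)
    (γ : lp (fun _ : G => ℂ) 2) (x0 : G) (hx0 : γ x0 ≠ 0)
    (hle : ∀ x, ‖γ x‖ ≤ ‖γ (h * x)‖) : False := by
  have hsum : Summable (fun x : G => ‖γ x‖ ^ ((2 : ℝ≥0∞)).toReal) :=
    (lp.memℓp γ).summable (by norm_num)
  set c := ‖γ x0‖ with hc
  have hcpos : 0 < c := norm_pos_iff.mpr hx0
  have hF : ∀ n : ℕ, c ≤ ‖γ (h ^ n * x0)‖ := by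
    intro n
    induction n with
    | zero => simp [hc]
    | succ n ih =>
        calc c ≤ ‖γ (h ^ n * x0)‖ := ih
          _ ≤ ‖γ (h * (h ^ n * x0))‖ := hle _
          _ = ‖γ (h ^ (n + 1) * x0)‖ := by rw [← mul_assoc, ← pow_succ']
  have hinj : Function.Injective (fun n : ℕ => h ^ n * x0) := by
    have := injective_pow_iff_not_isOfFinOrder.mpr hh
    exact fun m n hmn => this (mul_right_cancel hmn)
  have htend := hsum.tendsto_cofinite_zero.comp hinj.tendsto_cofinite
  rw [Nat.cofinite_eq_atTop] at htend
  have hlt : ∀ᶠ n in Filter.atTop,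
      (fun n : ℕ => ‖γ (h ^ n * x0)‖ ^ ((2 : ℝ≥0∞)).toReal) n < c ^ ((2 : ℝ≥0∞)).toReal := by
    have hcp : 0 < c ^ ((2 : ℝ≥0∞)).toReal := Real.rpow_pos_of_pos hcpos _
    exact htend.eventually (gt_mem_nhds hcp)
  obtain ⟨n, hn⟩ := hlt.exists
  exact absurd (Real.rpow_le_rpow hcpos.le (hF n) (by norm_num)) (not_le.mpr hn)

/-- For an element `g` of infinite order and nonzero `a, b ∈ ℂ`, the element
`a·1 + b·g ∈ ℂG` is not an analytical zero divisor. -/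
theorem stmt_7 {G : Type*} [Group G] (g : G) (hg : ¬ IsOfFinOrder g)
    (a b : ℂ) (ha : a ≠ 0) (hb : b ≠ 0) :
    ¬ ∃ γ : lp (fun _ : G => ℂ) 2, γ ≠ 0 ∧
      smulL2 (a • (1 : MonoidAlgebra ℂ G) + b • MonoidAlgebra.of ℂ G g) γ = 0 := by
  rintro ⟨γ, hγ0, hγ⟩
  classical
  set α := a • (1 : MonoidAlgebra ℂ G) + b • MonoidAlgebra.of ℂ G g with hα
  have hg1 : g ≠ 1 := by rintro rfl; exact hg IsOfFinOrder.one
  have happly : ∀ h : G, α.coeff h = a * (if (1:G) = h then 1 else 0) + b * (if g = h then 1 else 0) := by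
    intro h
    rw [hα]
    simp [MonoidAlgebra.coeff_add, MonoidAlgebra.coeff_smul_apply, MonoidAlgebra.one_def,
      MonoidAlgebra.coeff_single, Finsupp.single_apply]
  have hα1 : α.coeff 1 = a := by rw [happly]; simp [hg1]
  have hαg : α.coeff g = b := by rw [happly]; simp [hg1.symm]
  have hαother : ∀ h, h ≠ 1 → h ≠ g → α.coeff h = 0 := by
    intro h h1 h2
    rw [happly]
    simp [Ne.symm h1, Ne.symm h2]
  -- key pointwise relation
  have key : ∀ x, a * γ x + b * γ (g⁻¹ * x) = 0 := by
    intro x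
    have hx := congrFun hγ x
    rw [smulL2] at hx
    have hsub : α.coeff.support ⊆ {1, g} := by
      intro h hh
      simp only [Finset.mem_insert, Finset.mem_singleton]
      by_contra hc
      push_neg at hc
      exact Finsupp.mem_support_iff.mp hh (hαother h hc.1 hc.2)
    rw [Finset.sum_subset hsub
      (fun h _ hh => by rw [Finsupp.notMem_support_iff.mp hh, zero_mul])] at hx
    rw [Finset.sum_insert (by simpa using hg1.symm), Finset.sum_singleton] at hx
    simpa [hα1, hαg] using hx
  -- pick a nonzero coordinate
  have hex : ∃ x0, γ x0 ≠ 0 := by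
    by_contra hc
    push_neg at hc
    exact hγ0 (lp.ext (funext fun x => by simpa using hc x))
  obtain ⟨x0, hx0⟩ := hex
  rcases le_total ‖a‖ ‖b‖ with hab | hab
  · -- ‖a‖ ≤ ‖b‖: use h = g, since a γ(g x) = -(b γ x)
    refine aux_no_growth g hg γ x0 hx0 fun x => ?_
    have hk := key (g * x)
    rw [inv_mul_cancel_left] at hk
    have heq : a * γ (g * x) = -(b * γ x) := by linear_combination hk
    have hnorm : ‖a‖ * ‖γ (g * x)‖ = ‖b‖ * ‖γ x‖ := by
      rw [← norm_mul, heq, norm_neg, norm_mul]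
    have hapos : 0 < ‖a‖ := norm_pos_iff.mpr ha
    nlinarith [norm_nonneg (γ x), norm_nonneg (γ (g * x))]
  · -- ‖b‖ ≤ ‖a‖: use h = g⁻¹
    have hginv : ¬ IsOfFinOrder g⁻¹ := fun hf => hg (by simpa using hf.inv)
    refine aux_no_growth g⁻¹ hginv γ x0 hx0 fun x => ?_
    have hk := key x
    have heq : b * γ (g⁻¹ * x) = -(a * γ x) := by linear_combination hk
    have hnorm : ‖b‖ * ‖γ (g⁻¹ * x)‖ = ‖a‖ * ‖γ x‖ := by
      rw [← norm_mul, heq, norm_neg, norm_mul]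
    have hbpos : 0 < ‖b‖ := norm_pos_iff.mpr hb
    nlinarith [norm_nonneg (γ x), norm_nonneg (γ (g⁻¹ * x))]
end

section
/- Let G be a group and let α₁, …, αₙ (n ≥ 1) be finitely many elements of ℂG. If the element ∑_{i=1}^n αᵢ*αᵢ is an analytical zero divisor, then every αᵢ is an analytical zero divisor. Moreover, if β ∈ ℓ²(G) satisfies (∑_{i=1}^n αᵢ*αᵢ)β = 0, then αᵢβ = 0 for every i. -/
open scoped ENNReal ComplexConjugate
set_option maxHeartbeats 1000000

section Aux

variable {G : Type*} [Group G]

local notation "ℓ²" => lp (fun _ : G => ℂ) 2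

lemma adj_apply (α : MonoidAlgebra ℂ G) (g : G) :
    (MonoidAlgebra.adj α).coeff g = conj (α.coeff g⁻¹) := by
  simp [MonoidAlgebra.adj, MonoidAlgebra.coeff_ofCoeff, Finsupp.mapRange_apply, Finsupp.equivMapDomain_apply, Equiv.inv]

lemma smulL2_eq_sum (α : MonoidAlgebra ℂ G) (β : ℓ²) (x : G) :
    smulL2 α β x = α.coeff.sum fun g c => c * β (g⁻¹ * x) := rfl

lemma smulL2_zero (β : ℓ²) (x : G) : smulL2 (0 : MonoidAlgebra ℂ G) β x = 0 := by
  simp [smulL2_eq_sum]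

lemma smulL2_add (α γ : MonoidAlgebra ℂ G) (β : ℓ²) (x : G) :
    smulL2 (α + γ) β x = smulL2 α β x + smulL2 γ β x := by
  simp only [smulL2_eq_sum, MonoidAlgebra.coeff_add]
  exact Finsupp.sum_add_index' (fun _ => zero_mul _) (fun _ b c => add_mul b c _)

lemma smulL2_finsetSum {ι : Type*} (s : Finset ι) (δ : ι → MonoidAlgebra ℂ G) (β : ℓ²) (x : G) :
    smulL2 (∑ i ∈ s, δ i) β x = ∑ i ∈ s, smulL2 (δ i) β x := by
  classical
  induction s using Finset.induction_on with
  | empty => simp [smulL2_zero]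
  | insert _ _ h ih => simp [Finset.sum_insert h, smulL2_add, ih]

lemma smulL2_single_mul (a : G) (b : ℂ) (α : MonoidAlgebra ℂ G) (β : ℓ²) (x : G) :
    smulL2 (MonoidAlgebra.single a b * α) β x = b * smulL2 α β (a⁻¹ * x) := by
  classical
  have hsub : (MonoidAlgebra.single a b * α).coeff.support ⊆
      α.coeff.support.map ⟨fun k => a * k, mul_right_injective a⟩ := by
    intro h hh
    rw [Finsupp.mem_support_iff, MonoidAlgebra.coeff_single_mul_apply] at hh
    have : α.coeff (a⁻¹ * h) ≠ 0 := fun h0 => hh (by simp [h0])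
    simp only [Finset.mem_map, Function.Embedding.coeFn_mk]
    exact ⟨a⁻¹ * h, Finsupp.mem_support_iff.2 this, mul_inv_cancel_left a h⟩
  rw [smulL2]
  rw [Finset.sum_subset hsub (fun h _ hh => by
    rw [Finsupp.notMem_support_iff] at hh; simp [hh])]
  rw [Finset.sum_map]
  simp only [Function.Embedding.coeFn_mk, MonoidAlgebra.coeff_single_mul_apply]
  rw [smulL2, Finset.mul_sum]
  refine Finset.sum_congr rfl fun k _ => ?_
  rw [inv_mul_cancel_left, mul_inv_rev, mul_assoc, mul_assoc]

lemma smulL2_mul (γ α : MonoidAlgebra ℂ G) (β : ℓ²) (x : G) :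
    smulL2 (γ * α) β x = γ.coeff.sum fun g c => c * smulL2 α β (g⁻¹ * x) := by
  classical
  induction γ using MonoidAlgebra.induction with
  | zero => simp [smulL2_zero]
  | single_add a b f ha hb ih =>
    rw [add_mul, smulL2_add, ih, smulL2_single_mul, MonoidAlgebra.coeff_add,
      MonoidAlgebra.coeff_single,
      Finsupp.sum_add_index' (f := Finsupp.single a b) (g := f.coeff)
        (fun g => zero_mul (smulL2 α β (g⁻¹ * x)))
        (fun g b c => add_mul b c (smulL2 α β (g⁻¹ * x))),
      Finsupp.sum_single_index (zero_mul (smulL2 α β (a⁻¹ * x)))]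

lemma adj_sum {M : Type*} [AddCommMonoid M] (α : MonoidAlgebra ℂ G) (f : G → ℂ → M)
    (hf : ∀ g, f g 0 = 0) :
    (MonoidAlgebra.adj α).coeff.sum f = ∑ g ∈ α.coeff.support, f g⁻¹ (conj (α.coeff g)) := by
  classical
  have hsub : (MonoidAlgebra.adj α).coeff.support ⊆
      α.coeff.support.map ⟨fun k => k⁻¹, inv_injective⟩ := by
    intro g hg
    rw [Finsupp.mem_support_iff, adj_apply] at hg
    have : α.coeff g⁻¹ ≠ 0 := fun h0 => hg (by simp [h0])
    simp only [Finset.mem_map, Function.Embedding.coeFn_mk]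
    exact ⟨g⁻¹, Finsupp.mem_support_iff.2 this, inv_inv g⟩
  rw [Finsupp.sum_of_support_subset _ hsub _ (fun g _ => hf g), Finset.sum_map]
  simp only [Function.Embedding.coeFn_mk, adj_apply, inv_inv]

lemma translate_memℓp2 (g : G) (β : ℓ²) : Memℓp (fun x => β (g⁻¹ * x)) 2 := by
  have h : Memℓp (⇑β) 2 := lp.memℓp β
  have hp : 0 < (2 : ℝ≥0∞).toReal := by norm_num
  rw [memℓp_gen_iff hp] at h ⊢
  exact (Equiv.mulLeft g⁻¹).summable_iff.2 h

noncomputable def tLp (g : G) (β : ℓ²) : ℓ² := ⟨fun x => β (g⁻¹ * x), translate_memℓp2 g β⟩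

@[simp] lemma tLp_apply (g : G) (β : ℓ²) (x : G) : tLp g β x = β (g⁻¹ * x) := rfl

noncomputable def uLp (α : MonoidAlgebra ℂ G) (β : ℓ²) : ℓ² :=
  ∑ g ∈ α.coeff.support, α.coeff g • tLp g β

lemma uLp_apply (α : MonoidAlgebra ℂ G) (β : ℓ²) (x : G) :
    uLp α β x = smulL2 α β x := by
  rw [uLp, smulL2]
  rw [lp.coeFn_sum]
  rw [Finset.sum_apply]
  refine Finset.sum_congr rfl fun g _ => ?_
  rw [lp.coeFn_smul]
  simp [tLp]


lemma summable_conj_mul (β h : ℓ²) : Summable fun x => conj (β x) * h x := by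
  have := lp.summable_inner (𝕜 := ℂ) β h
  simpa [RCLike.inner_apply, mul_comm] using this

lemma tsum_conj_mul (β h : ℓ²) : ∑' x, conj (β x) * h x = inner (𝕜 := ℂ) β h := by
  rw [lp.inner_eq_tsum]
  exact tsum_congr fun x => by rw [RCLike.inner_apply, mul_comm]

lemma key (α : MonoidAlgebra ℂ G) (β : ℓ²) :
    ∑' x, conj (β x) * smulL2 (MonoidAlgebra.adj α * α) β x
      = ((‖uLp α β‖ : ℂ)) ^ 2 := by
  classical
  set u := uLp α β with hu
  have hform : ∀ x, smulL2 (MonoidAlgebra.adj α * α) β x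
      = ∑ g ∈ α.coeff.support, conj (α.coeff g) * u (g * x) := by
    intro x
    rw [smulL2_mul, adj_sum α (fun h c => c * smulL2 α β (h⁻¹ * x)) (fun g => zero_mul _)]
    refine Finset.sum_congr rfl fun g _ => ?_
    rw [inv_inv, uLp_apply]
  have hsum : ∀ g : G, Summable (fun x => conj (α.coeff g) * (conj (β x) * u (g * x))) := by
    intro g
    apply Summable.mul_left
    have := summable_conj_mul β (tLp g⁻¹ u)
    simpa [tLp_apply, inv_inv] using this
  calc ∑' x, conj (β x) * smulL2 (MonoidAlgebra.adj α * α) β x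
      = ∑' x, ∑ g ∈ α.coeff.support, conj (α.coeff g) * (conj (β x) * u (g * x)) := by
        refine tsum_congr fun x => ?_
        rw [hform x, Finset.mul_sum]
        exact Finset.sum_congr rfl fun g _ => by ring
    _ = ∑ g ∈ α.coeff.support, ∑' x, conj (α.coeff g) * (conj (β x) * u (g * x)) :=
        Summable.tsum_finsetSum fun g _ => hsum g
    _ = ∑ g ∈ α.coeff.support, conj (α.coeff g) * ∑' x, conj (β x) * u (g * x) :=
        Finset.sum_congr rfl fun g _ => tsum_mul_left
    _ = ∑ g ∈ α.coeff.support, conj (α.coeff g) * inner (𝕜 := ℂ) (tLp g β) u := by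
        refine Finset.sum_congr rfl fun g _ => ?_
        congr 1
        rw [← tsum_conj_mul (tLp g β) u,
          ← (Equiv.mulLeft g).tsum_eq (fun x => conj ((tLp g β) x) * u x)]
        refine tsum_congr fun y => ?_
        simp [tLp_apply, inv_mul_cancel_left]
    _ = inner (𝕜 := ℂ) u u := by
        rw [hu, uLp, sum_inner]
        exact Finset.sum_congr rfl fun g _ => (inner_smul_left _ _ _).symm
    _ = (‖u‖ : ℂ) ^ 2 := inner_self_eq_norm_sq_to_K u

end Aux

/-- If `∑ αᵢ*αᵢ` is an analytical zero divisor then each `αᵢ` is; moreover any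
`β ∈ ℓ²(G)` killed by `∑ αᵢ*αᵢ` is killed by each `αᵢ`. -/
theorem stmt_8 {G : Type*} [Group G] (n : ℕ) (hn : 1 ≤ n)
    (α : Fin n → MonoidAlgebra ℂ G) :
    (∀ β : lp (fun _ : G => ℂ) 2,
        smulL2 (∑ i, MonoidAlgebra.adj (α i) * α i) β = 0 → ∀ i, smulL2 (α i) β = 0) ∧
      ((∃ β : lp (fun _ : G => ℂ) 2, β ≠ 0 ∧
          smulL2 (∑ i, MonoidAlgebra.adj (α i) * α i) β = 0) →
        ∀ i, ∃ β : lp (fun _ : G => ℂ) 2, β ≠ 0 ∧ smulL2 (α i) β = 0) := by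
  classical
  have main : ∀ β : lp (fun _ : G => ℂ) 2,
      smulL2 (∑ i, MonoidAlgebra.adj (α i) * α i) β = 0 → ∀ i, smulL2 (α i) β = 0 := by
    intro β h i
    have hterm : ∀ j : Fin n,
        Summable fun x => conj (β x) * smulL2 (MonoidAlgebra.adj (α j) * α j) β x := by
      intro j
      exact (summable_conj_mul β (uLp (MonoidAlgebra.adj (α j) * α j) β)).congr
        fun x => by rw [uLp_apply]
    have h0 : (0 : ℂ)
        = ∑ j : Fin n, ∑' x, conj (β x) * smulL2 (MonoidAlgebra.adj (α j) * α j) β x := by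
      calc (0 : ℂ)
          = ∑' x : G, conj (β x) * smulL2 (∑ j, MonoidAlgebra.adj (α j) * α j) β x := by
            rw [h]; simp
        _ = ∑' x : G, ∑ j : Fin n, conj (β x) * smulL2 (MonoidAlgebra.adj (α j) * α j) β x := by
            refine tsum_congr fun x => ?_
            rw [smulL2_finsetSum, Finset.mul_sum]
        _ = _ := Summable.tsum_finsetSum fun j _ => hterm j
    have h1 : (0 : ℂ) = ∑ j : Fin n, ((‖uLp (α j) β‖ : ℂ)) ^ 2 := by
      rw [h0]
      exact Finset.sum_congr rfl fun j _ => key (α j) β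
    have h2 : ∑ j : Fin n, ‖uLp (α j) β‖ ^ 2 = (0 : ℝ) := by
      have h1' := h1.symm
      rw [show (∑ j : Fin n, ((‖uLp (α j) β‖ : ℂ)) ^ 2)
          = ((∑ j : Fin n, ‖uLp (α j) β‖ ^ 2 : ℝ) : ℂ) by push_cast; ring] at h1'
      exact_mod_cast h1'
    have h3 : ‖uLp (α i) β‖ ^ 2 = 0 :=
      (Finset.sum_eq_zero_iff_of_nonneg fun j _ => sq_nonneg _).1 h2 i (Finset.mem_univ i)
    have h4 : uLp (α i) β = 0 := by
      rw [pow_eq_zero_iff (two_ne_zero)] at h3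
      exact norm_eq_zero.1 h3
    funext x
    rw [← uLp_apply, h4]
    simp
  refine ⟨main, ?_⟩
  rintro ⟨β, hβ, h0⟩ i
  exact ⟨β, hβ, main β h0 i⟩
end

section
/- Let G be a torsion-free group and let α ∈ ℂG be a nonzero golden element (i.e. α is self-adjoint with Υ(α) = a_1 − ∑_{g≠1} |a_g| ≥ 0). Then α is regular in ℂG: αβ ≠ 0 for every nonzero β ∈ ℂG. -/
open scoped ENNReal

/-- In the group algebra of a torsion-free group, every nonzero golden element is
regular. -/
theorem stmt_12 {G : Type*} [Group G] [DecidableEq G] (hG : ∀ g : G, g ≠ 1 → ¬IsOfFinOrder g)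
    (α : MonoidAlgebra ℂ G) (hα : α ≠ 0) (hgold : IsGolden α) :
    ∀ β : MonoidAlgebra ℂ G, β ≠ 0 → α * β ≠ 0 := by
  classical
  intro β hβ hmul
  set s : Finset G := β.coeff.support with hs
  obtain ⟨x₀, hx₀⟩ := Finsupp.support_nonempty_iff.mpr (MonoidAlgebra.coeff_eq_zero.not.mpr hβ)
  set N : ℝ := ∑ x ∈ s, Complex.normSq (β.coeff x) with hN
  have hNpos : 0 < N := by
    refine Finset.sum_pos' (fun x _ => Complex.normSq_nonneg _) ⟨x₀, hx₀, ?_⟩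
    exact Complex.normSq_pos.mpr (Finsupp.mem_support_iff.mp hx₀)
  set I : G → ℂ := fun g => ∑ x ∈ s, β.coeff (g⁻¹ * x) * (starRingEnd ℂ) (β.coeff x) with hIdef
  -- The key strict bound on translated energy
  have hAle : ∀ g : G, (∑ x ∈ s, Complex.normSq (β.coeff (g⁻¹ * x))) ≤ N := by
    intro g
    have hinj : Set.InjOn (fun x => g⁻¹ * x) s := fun a _ b _ h => by
      simpa using mul_left_cancel h
    have himg : (∑ x ∈ s, Complex.normSq (β.coeff (g⁻¹ * x)))
        = ∑ y ∈ s.image (fun x => g⁻¹ * x), Complex.normSq (β.coeff y) := by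
      rw [Finset.sum_image (fun a _ b _ h => mul_left_cancel h)]
    rw [himg]
    have h1 : ∑ y ∈ s.image (fun x => g⁻¹ * x), Complex.normSq (β.coeff y)
        = ∑ y ∈ (s.image (fun x => g⁻¹ * x)) ∩ s, Complex.normSq (β.coeff y) := by
      refine (Finset.sum_subset (Finset.inter_subset_left) ?_).symm
      intro y _ hy
      have : y ∉ s := fun h => hy (Finset.mem_inter.mpr ⟨‹_›, h⟩)
      simp [Finsupp.notMem_support_iff.mp this]
    rw [h1]
    exact Finset.sum_le_sum_of_subset_of_nonneg Finset.inter_subset_right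
      (fun _ _ _ => Complex.normSq_nonneg _)
  have hAlt : ∀ g : G, g ≠ 1 → (∑ x ∈ s, Complex.normSq (β.coeff (g⁻¹ * x))) < N := by
    intro g hg
    have hinj : Set.InjOn (fun x => g⁻¹ * x) s := fun a _ b _ h => by
      simpa using mul_left_cancel h
    have himg : (∑ x ∈ s, Complex.normSq (β.coeff (g⁻¹ * x)))
        = ∑ y ∈ s.image (fun x => g⁻¹ * x), Complex.normSq (β.coeff y) := by
      rw [Finset.sum_image (fun a _ b _ h => mul_left_cancel h)]
    set t := s.image (fun x => g⁻¹ * x) with ht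
    have h1 : ∑ y ∈ t, Complex.normSq (β.coeff y)
        = ∑ y ∈ t ∩ s, Complex.normSq (β.coeff y) := by
      refine (Finset.sum_subset (Finset.inter_subset_left) ?_).symm
      intro y _ hy
      have : y ∉ s := fun h => hy (Finset.mem_inter.mpr ⟨‹_›, h⟩)
      simp [Finsupp.notMem_support_iff.mp this]
    -- not every y ∈ s has g * y ∈ s
    have hnotall : ¬ ∀ y ∈ s, g * y ∈ s := by
      intro hall
      have horb : ∀ n : ℕ, g ^ n * x₀ ∈ s := by
        intro n
        induction n with
        | zero => simp only [pow_zero, one_mul]; exact hx₀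
        | succ n ih =>
            have h := hall _ ih
            rw [pow_succ', mul_assoc]
            exact h
      have hginj : Function.Injective (fun n : ℕ => g ^ n) :=
        injective_pow_iff_not_isOfFinOrder.mpr (hG g hg)
      have hforb : Function.Injective (fun n : ℕ => g ^ n * x₀) := by
        intro a b hab
        exact hginj (mul_right_cancel hab)
      exact Set.not_infinite.mpr s.finite_toSet
        (Set.infinite_of_injective_forall_mem hforb (fun n => horb n))
    push_neg at hnotall
    obtain ⟨y₀, hy₀s, hy₀⟩ := hnotall
    have hy₀t : y₀ ∉ t ∩ s := by
      intro h
      rcases Finset.mem_image.mp (Finset.mem_inter.mp h).1 with ⟨x, hx, hxe⟩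
      apply hy₀
      rw [← hxe]
      simpa using hx
    rw [himg, h1]
    refine Finset.sum_lt_sum_of_subset Finset.inter_subset_right hy₀s hy₀t ?_
      (fun _ _ _ => Complex.normSq_nonneg _)
    exact Complex.normSq_pos.mpr (Finsupp.mem_support_iff.mp hy₀s)
  have hIle : ∀ g : G, ‖I g‖
      ≤ ((∑ x ∈ s, Complex.normSq (β.coeff (g⁻¹ * x))) + N) / 2 := by
    intro g
    calc ‖I g‖ ≤ ∑ x ∈ s, ‖β.coeff (g⁻¹ * x) * (starRingEnd ℂ) (β.coeff x)‖ :=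
          norm_sum_le _ _
      _ ≤ ∑ x ∈ s, (Complex.normSq (β.coeff (g⁻¹ * x)) + Complex.normSq (β.coeff x)) / 2 := by
          refine Finset.sum_le_sum fun x _ => ?_
          rw [norm_mul, Complex.norm_conj]
          rw [← Complex.sq_norm, ← Complex.sq_norm]
          nlinarith [two_mul_le_add_sq (‖β.coeff (g⁻¹ * x)‖) (‖β.coeff x‖),
            norm_nonneg (β.coeff (g⁻¹ * x)), norm_nonneg (β.coeff x)]
      _ = ((∑ x ∈ s, Complex.normSq (β.coeff (g⁻¹ * x))) + N) / 2 := by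
          rw [hN, ← Finset.sum_div, Finset.sum_add_distrib]
  have hIleN : ∀ g : G, ‖I g‖ ≤ N := fun g =>
    (hIle g).trans (by linarith [hAle g])
  have hIltN : ∀ g : G, g ≠ 1 → ‖I g‖ < N := fun g hg =>
    (hIle g).trans_lt (by linarith [hAlt g hg])
  -- the vanishing of the "inner product"
  have hz : (0 : ℂ) = ∑ g ∈ α.coeff.support, α.coeff g * I g := by
    have h0 : (0 : ℂ) = ∑ x ∈ s, (α * β).coeff x * (starRingEnd ℂ) (β.coeff x) := by
      simp [hmul]
    rw [h0]
    have hmulapp : ∀ x : G, (α * β).coeff x = ∑ g ∈ α.coeff.support, α.coeff g * β.coeff (g⁻¹ * x) := by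
      intro x
      rw [MonoidAlgebra.coeff_mul_apply_left]
      rfl
    calc ∑ x ∈ s, (α * β).coeff x * (starRingEnd ℂ) (β.coeff x)
        = ∑ x ∈ s, ∑ g ∈ α.coeff.support, α.coeff g * β.coeff (g⁻¹ * x) * (starRingEnd ℂ) (β.coeff x) := by
          refine Finset.sum_congr rfl fun x _ => ?_
          rw [hmulapp x, Finset.sum_mul]
      _ = ∑ g ∈ α.coeff.support, ∑ x ∈ s, α.coeff g * β.coeff (g⁻¹ * x) * (starRingEnd ℂ) (β.coeff x) :=
          Finset.sum_comm
      _ = ∑ g ∈ α.coeff.support, α.coeff g * I g := by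
          refine Finset.sum_congr rfl fun g _ => ?_
          rw [hIdef, Finset.mul_sum]
          exact Finset.sum_congr rfl fun x _ => by ring
  have hI1 : I 1 = (N : ℂ) := by
    rw [hIdef]
    simp only [inv_one, one_mul]
    rw [hN, Complex.ofReal_sum]
    exact Finset.sum_congr rfl fun x _ => (Complex.mul_conj (β.coeff x))
  have hre : (0 : ℝ) = (α.coeff 1).re * N + ∑ g ∈ α.coeff.support.erase 1, (α.coeff g * I g).re := by
    have h1 : (0 : ℝ) = ∑ g ∈ α.coeff.support, (α.coeff g * I g).re := by
      rw [← Complex.re_sum, ← hz]; simp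
    have h2 : (α.coeff 1 * I 1).re = (α.coeff 1).re * N := by
      rw [hI1, Complex.mul_re]; simp
    by_cases hmem : (1 : G) ∈ α.coeff.support
    · rw [h1, ← Finset.add_sum_erase _ _ hmem, h2]
    · rw [Finset.erase_eq_self.mpr hmem, h1]
      have : α.coeff 1 = 0 := Finsupp.notMem_support_iff.mp hmem
      rw [this]; simp
  -- case: support of α inside {1}
  by_cases hsupp : ∃ g ∈ α.coeff.support, g ≠ 1
  · obtain ⟨g₀, hg₀s, hg₀⟩ := hsupp
    have hg₀e : g₀ ∈ α.coeff.support.erase 1 := Finset.mem_erase.mpr ⟨hg₀, hg₀s⟩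
    have hle : ∀ g ∈ α.coeff.support.erase 1, -(‖α.coeff g‖ * N) ≤ (α.coeff g * I g).re := by
      intro g _
      have h1 : -(‖α.coeff g * I g‖) ≤ (α.coeff g * I g).re := by
        have := Complex.abs_re_le_norm (α.coeff g * I g)
        cases abs_le.mp this with
        | intro hl hr => linarith
      refine le_trans ?_ h1
      rw [norm_mul]
      exact neg_le_neg (mul_le_mul_of_nonneg_left (hIleN g) (norm_nonneg _))
    have hlt : -(‖α.coeff g₀‖ * N) < (α.coeff g₀ * I g₀).re := by
      have h1 : -(‖α.coeff g₀ * I g₀‖) ≤ (α.coeff g₀ * I g₀).re := by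
        have := Complex.abs_re_le_norm (α.coeff g₀ * I g₀)
        cases abs_le.mp this with
        | intro hl hr => linarith
      refine lt_of_lt_of_le ?_ h1
      rw [norm_mul]
      refine neg_lt_neg ?_
      refine mul_lt_mul_of_pos_left (hIltN g₀ hg₀) ?_
      exact norm_pos_iff.mpr (Finsupp.mem_support_iff.mp hg₀s)
    have hsum : ∑ g ∈ α.coeff.support.erase 1, -(‖α.coeff g‖ * N)
        < ∑ g ∈ α.coeff.support.erase 1, (α.coeff g * I g).re :=
      Finset.sum_lt_sum hle ⟨g₀, hg₀e, hlt⟩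
    have hsum2 : ∑ g ∈ α.coeff.support.erase 1, -(‖α.coeff g‖ * N)
        = -((∑ g ∈ α.coeff.support.erase 1, ‖α.coeff g‖) * N) := by
      simp [Finset.sum_mul]
    have hUps : 0 ≤ Upsilon α := hgold.2
    rw [Upsilon] at hUps
    nlinarith [hsum, hre]
  · push_neg at hsupp
    have hsub : α.coeff.support ⊆ {1} := fun g hg => Finset.mem_singleton.mpr (hsupp g hg)
    have ha1 : α.coeff 1 ≠ 0 := by
      intro h
      apply hα
      ext g
      by_cases hg : g ∈ α.coeff.support
      · rw [Finset.mem_singleton.mp (hsub hg)]; exact h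
      · exact Finsupp.notMem_support_iff.mp hg
    have : (α * β).coeff x₀ = α.coeff 1 * β.coeff x₀ := by
      rw [MonoidAlgebra.coeff_mul_apply_left]
      rw [Finsupp.sum]
      have h1 : (1 : G) ∈ α.coeff.support := Finsupp.mem_support_iff.mpr ha1
      have : α.coeff.support = {1} := Finset.Subset.antisymm hsub (Finset.singleton_subset_iff.mpr h1)
      rw [this]
      simp
    rw [hmul] at this
    exact (mul_ne_zero ha1 (Finsupp.mem_support_iff.mp hx₀)) this.symm
end
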